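/- Let a and b be linear operators on ℂ² satisfying ab + ba = 1, a² = 0, b² = 0, let φ₀ ≠ 0 satisfy aφ₀ = 0 and Ψ₀ ≠ 0 satisfy b*Ψ₀ = 0, and set φ₁ := bφ₀, Ψ₁ := a*Ψ₀. Then {φ₀, φ₁} is linearly independent and hence a basis of ℂ², and likewise {Ψ₀, Ψ₁} is a basis of ℂ². -/

import Mathlib

open Matrix
open scoped InnerProductSpace ComplexOrder

noncomputable section

/-- Action of a 2×2 complex matrix (an operator) on a vector of ℂ². -/
def act (A : Matrix (Fin 2) (Fin 2) ℂ) (x : EuclideanSpace ℂ (Fin 2)) :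
    EuclideanSpace ℂ (Fin 2) := WithLp.toLp 2 (A.mulVec x)

lemma key (a b : Matrix (Fin 2) (Fin 2) ℂ)
    (hab : a * b + b * a = 1)
    (φ₀ : EuclideanSpace ℂ (Fin 2)) (hφ₀ : φ₀ ≠ 0)
    (hvac : act a φ₀ = 0) :
    LinearIndependent ℂ ![φ₀, act b φ₀] ∧
    Submodule.span ℂ {φ₀, act b φ₀} = ⊤ := by
  have hab' : a.mulVec (b.mulVec φ₀) = φ₀ := by
    have h : a * b = 1 - b * a := eq_sub_of_add_eq hab
    have hstep : (a * b).mulVec φ₀ = φ₀ := by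
      rw [h, Matrix.sub_mulVec, Matrix.one_mulVec, ← Matrix.mulVec_mulVec]
      have hv : a.mulVec φ₀ = 0 := by simpa [act] using congrArg WithLp.ofLp hvac
      rw [hv, Matrix.mulVec_zero, sub_zero]
    rw [Matrix.mulVec_mulVec, hstep]
  have hli : LinearIndependent ℂ ![φ₀, act b φ₀] := by
    rw [LinearIndependent.pair_iff]
    intro s t hst
    have happ : a.mulVec (s • φ₀ + t • act b φ₀) = 0 := by
      have hst' := congrArg WithLp.ofLp hst
      simp only [WithLp.ofLp_add, WithLp.ofLp_smul, WithLp.ofLp_zero] at hst'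
      rw [hst']; exact Matrix.mulVec_zero a
    rw [Matrix.mulVec_add, Matrix.mulVec_smul, Matrix.mulVec_smul] at happ
    have hv : a.mulVec φ₀ = 0 := by simpa [act] using congrArg WithLp.ofLp hvac
    have ht : t • φ₀ = 0 := by
      rw [hv, smul_zero, zero_add] at happ
      rw [← WithLp.ofLp_eq_zero, WithLp.ofLp_smul]; simpa only [act, WithLp.ofLp_toLp, hab'] using happ
    have ht0 : t = 0 := by
      rcases smul_eq_zero.mp ht with h | h
      · exact h
      · exact absurd h hφ₀
    subst ht0
    have hs : s • φ₀ = 0 := by simpa using hst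
    have hs0 : s = 0 := by
      rcases smul_eq_zero.mp hs with h | h
      · exact h
      · exact absurd h hφ₀
    exact ⟨hs0, rfl⟩
  refine ⟨hli, ?_⟩
  have hrange : Set.range ![φ₀, act b φ₀] = {φ₀, act b φ₀} := by
    simp [Matrix.range_cons, Matrix.range_empty, Set.insert_comm, Set.pair_comm]
  rw [← hrange]
  apply hli.span_eq_top_of_card_eq_finrank
  simp

/-- The families `{φ₀, φ₁}` and `{Ψ₀, Ψ₁}` are linearly independent and
hence bases of ℂ². -/
theorem stmt4 (a b : Matrix (Fin 2) (Fin 2) ℂ)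
    (hab : a * b + b * a = 1) (ha2 : a * a = 0) (hb2 : b * b = 0)
    (φ₀ Ψ₀ : EuclideanSpace ℂ (Fin 2)) (hφ₀ : φ₀ ≠ 0) (hΨ₀ : Ψ₀ ≠ 0)
    (hvacφ : act a φ₀ = 0) (hvacΨ : act bᴴ Ψ₀ = 0) :
    LinearIndependent ℂ ![φ₀, act b φ₀] ∧
    Submodule.span ℂ {φ₀, act b φ₀} = ⊤ ∧
    LinearIndependent ℂ ![Ψ₀, act aᴴ Ψ₀] ∧
    Submodule.span ℂ {Ψ₀, act aᴴ Ψ₀} = ⊤ := by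
  obtain ⟨h1, h2⟩ := key a b hab φ₀ hφ₀ hvacφ
  have hab2 : bᴴ * aᴴ + aᴴ * bᴴ = 1 := by
    have := congrArg Matrix.conjTranspose hab
    simpa [Matrix.conjTranspose_add, Matrix.conjTranspose_mul, add_comm] using this
  obtain ⟨h3, h4⟩ := key bᴴ aᴴ hab2 Ψ₀ hΨ₀ hvacΨ
  exact ⟨h1, h2, h3, h4⟩
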